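/- Let g ≥ 2. Let α₁(x) = x_0 and α₀(x) = x_0 + x_1 be linear forms on V = (Fin (g+1) → ZMod 2). For i ∈ {0,1}, if θ is any linear form on V with θ ≠ θ₀, θ ≠ θ₁ and ∑_{j=0}^{g} θ(e_j) = i (i.e. θ lies in the orbit orb_i of α_i), then the stabilizer Iso_θ is conjugate in O(V) to Iso_{α_i}: there exists S ∈ O(V) with Iso_θ = S · Iso_{α_i} · S⁻¹. -/

import Mathlib

namespace IsoConjAux

lemma z2_add_self : ∀ z : ZMod 2, z + z = 0 := by decide
lemma z2_mul_self : ∀ z : ZMod 2, z * z = z := by decide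
lemma z2_cases : ∀ z : ZMod 2, z = 0 ∨ z = 1 := by decide

lemma z2f_add_self {n : ℕ} (x : Fin n → ZMod 2) : x + x = 0 :=
  funext fun i => z2_add_self (x i)

variable {n : ℕ}

def ip (x y : Fin n → ZMod 2) : ZMod 2 := ∑ i, x i * y i

lemma ip_comm (x y : Fin n → ZMod 2) : ip x y = ip y x := by
  simp [ip, mul_comm]

lemma ip_add_left (x y z : Fin n → ZMod 2) : ip (x + y) z = ip x z + ip y z := by
  simp [ip, add_mul, Finset.sum_add_distrib]

lemma ip_add_right (x y z : Fin n → ZMod 2) : ip x (y + z) = ip x y + ip x z := by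
  simp [ip, mul_add, Finset.sum_add_distrib]

lemma ip_smul_left (c : ZMod 2) (x y : Fin n → ZMod 2) : ip (c • x) y = c * ip x y := by
  simp [ip, Finset.mul_sum, mul_assoc]

lemma ip_smul_right (c : ZMod 2) (x y : Fin n → ZMod 2) : ip x (c • y) = c * ip x y := by
  simp [ip, Finset.mul_sum, mul_left_comm]

lemma ip_single_right (x : Fin n → ZMod 2) (j : Fin n) : ip x (Pi.single j 1) = x j := by
  simp [ip, Pi.single_apply, mul_ite, Finset.sum_ite_eq']

lemma ip_single_left (x : Fin n → ZMod 2) (j : Fin n) : ip (Pi.single j 1) x = x j := by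
  rw [ip_comm, ip_single_right]

def tvL (v : Fin n → ZMod 2) : (Fin n → ZMod 2) →ₗ[ZMod 2] (Fin n → ZMod 2) where
  toFun x := x + ip x v • v
  map_add' x y := by rw [ip_add_left, add_smul]; abel
  map_smul' c x := by simp only [ip_smul_left, mul_smul, smul_add, RingHom.id_apply]

lemma tvL_apply (v x : Fin n → ZMod 2) : tvL v x = x + ip x v • v := rfl

lemma tvL_invol (v : Fin n → ZMod 2) (hv : ip v v = 0) : Function.Involutive (tvL v) := by
  intro x
  rw [tvL_apply, tvL_apply, ip_add_left, ip_smul_left, hv, mul_zero, add_zero,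
    add_assoc, ← add_smul, z2_add_self, zero_smul, add_zero]

def tv (v : Fin n → ZMod 2) (hv : ip v v = 0) :
    (Fin n → ZMod 2) ≃ₗ[ZMod 2] (Fin n → ZMod 2) :=
  LinearEquiv.ofInvolutive (tvL v) (tvL_invol v hv)

lemma tv_apply (v : Fin n → ZMod 2) (hv : ip v v = 0) (x : Fin n → ZMod 2) :
    tv v hv x = x + ip x v • v := rfl

lemma tv_orth (v : Fin n → ZMod 2) (hv : ip v v = 0) (x y : Fin n → ZMod 2) :
    ip (tv v hv x) (tv v hv y) = ip x y := by
  rw [tv_apply, tv_apply, ip_add_left, ip_add_right, ip_add_right,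
    ip_smul_left, ip_smul_right, ip_smul_right, ip_smul_left, hv,
    mul_zero, mul_zero, add_zero, ip_comm v y, mul_comm (ip y v) (ip x v),
    mul_comm (ip x v) (ip y v)]
  rw [add_assoc, mul_comm (ip y v) (ip x v), z2_add_self, add_zero]

lemma tv_selfadj (v : Fin n → ZMod 2) (hv : ip v v = 0) (u x : Fin n → ZMod 2) :
    ip u (tv v hv x) = ip (tv v hv u) x := by
  rw [tv_apply, tv_apply, ip_add_right, ip_add_left, ip_smul_right, ip_smul_left,
    ip_comm v x, mul_comm]

lemma tv_move (u w : Fin n → ZMod 2) (hq : ip u u = ip w w)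
    (h : ip u w = ip u u + 1 ∨ u = w) (hv : ip (u + w) (u + w) = 0) :
    tv (u + w) hv u = w := by
  rcases h with h | rfl
  · rw [tv_apply, ip_add_right, h, ← add_assoc (ip u u), z2_add_self, zero_add, one_smul,
      ← add_assoc, z2f_add_self, zero_add]
  · rw [tv_apply, ip_add_right, z2_add_self, zero_smul, add_zero]

lemma exists_S (a b c : Fin n → ZMod 2)
    (hqac : ip a a = ip c c) (hqcb : ip c c = ip b b)
    (h1 : ip a c = ip a a + 1 ∨ a = c)
    (h2 : ip c b = ip c c + 1 ∨ c = b) :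
    ∃ S : (Fin n → ZMod 2) ≃ₗ[ZMod 2] (Fin n → ZMod 2),
      (∀ x y, ip (S x) (S y) = ip x y) ∧ ∀ x, ip a (S x) = ip b x := by
  have hv1 : ip (a + c) (a + c) = 0 := by
    rw [ip_add_left, ip_add_right, ip_add_right, hqac, ip_comm c a, add_assoc,
      ← add_assoc (ip a c), z2_add_self, zero_add, z2_add_self]
  have hv2 : ip (c + b) (c + b) = 0 := by
    rw [ip_add_left, ip_add_right, ip_add_right, hqcb, ip_comm b c, add_assoc,
      ← add_assoc (ip c b), z2_add_self, zero_add, z2_add_self]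
  refine ⟨(tv (c + b) hv2).trans (tv (a + c) hv1), ?_, ?_⟩
  · intro x y
    simp only [LinearEquiv.trans_apply, tv_orth]
  · intro x
    simp only [LinearEquiv.trans_apply]
    rw [tv_selfadj, tv_move a c hqac h1 hv1, tv_selfadj, tv_move c b hqcb h2 hv2]

lemma conj_stab (θ : (Fin n → ZMod 2) →ₗ[ZMod 2] ZMod 2)
    (α : (Fin n → ZMod 2) → ZMod 2)
    (S : (Fin n → ZMod 2) ≃ₗ[ZMod 2] (Fin n → ZMod 2))
    (hS : ∀ x y, ip (S x) (S y) = ip x y)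
    (hSθ : ∀ x, θ (S x) = α x) :
    {F : (Fin n → ZMod 2) ≃ₗ[ZMod 2] (Fin n → ZMod 2) |
        (∀ x y, ip (F x) (F y) = ip x y) ∧ ∀ x, θ (F x) = θ x} =
      {F | ∃ G : (Fin n → ZMod 2) ≃ₗ[ZMod 2] (Fin n → ZMod 2),
        ((∀ x y, ip (G x) (G y) = ip x y) ∧ ∀ x, α (G x) = α x) ∧
        ∀ x, F x = S (G (S.symm x))} := by
  have hSsymm : ∀ x y, ip (S.symm x) (S.symm y) = ip x y := by
    intro x y
    conv_rhs => rw [← S.apply_symm_apply x, ← S.apply_symm_apply y, hS]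
  have hα : ∀ x, α x = θ (S x) := fun x => (hSθ x).symm
  ext F
  simp only [Set.mem_setOf_eq]
  constructor
  · rintro ⟨hFo, hFθ⟩
    refine ⟨S.trans (F.trans S.symm), ⟨⟨?_, ?_⟩, ?_⟩⟩
    · intro x y
      simp only [LinearEquiv.trans_apply, hSsymm, hFo, hS]
    · intro x
      simp only [LinearEquiv.trans_apply, hα, S.apply_symm_apply, hFθ]
    · intro x
      simp only [LinearEquiv.trans_apply, S.apply_symm_apply, S.symm_apply_apply]
  · rintro ⟨G, ⟨hGo, hGα⟩, hFG⟩
    constructor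
    · intro x y
      rw [hFG, hFG, hS, hGo, hSsymm]
    · intro x
      rw [hFG, hSθ, hGα, hα, S.apply_symm_apply]

lemma theta_eq (θ : (Fin n → ZMod 2) →ₗ[ZMod 2] ZMod 2) (x : Fin n → ZMod 2) :
    θ x = ip (fun j => θ (Pi.single j 1)) x := by
  have hx : x = ∑ j, x j • Pi.single j (1 : ZMod 2) := by
    conv_lhs => rw [← Finset.univ_sum_single x]
    refine Finset.sum_congr rfl fun j _ => ?_
    rw [← Pi.single_smul, smul_eq_mul, mul_one]
  conv_lhs => rw [hx]
  rw [map_sum, ip]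
  exact Finset.sum_congr rfl fun j _ => by rw [map_smul, smul_eq_mul, mul_comm]

end IsoConjAux

open IsoConjAux in
/-- For `g ≥ 2`, let `α₀ : x ↦ x 0 + x 1` and `α₁ : x ↦ x 0` on `V = Fin (g+1) → ZMod 2`.
For `i ∈ {0,1}`, if `θ` is a linear form with `θ ≠ θ₀`, `θ ≠ θ₁` and `∑ⱼ θ(eⱼ) = i`
(i.e. `θ ∈ orb_i`), then the isotropy subgroup `Iso_θ` is conjugate in `O(V)` to
`Iso_{α_i}`: there is an orthogonal `S` with `Iso_θ = S · Iso_{α_i} · S⁻¹`. -/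
theorem isotropy_conjugate (g : ℕ) (hg : 2 ≤ g)
    (θ : (Fin (g + 1) → ZMod 2) →ₗ[ZMod 2] ZMod 2)
    (hθ0 : θ ≠ 0)
    (hθ1 : ⇑θ ≠ fun x : Fin (g + 1) → ZMod 2 => ∑ i, x i) :
    (∑ i, θ (Pi.single i (1 : ZMod 2)) = 0 →
      ∃ S : (Fin (g + 1) → ZMod 2) ≃ₗ[ZMod 2] (Fin (g + 1) → ZMod 2),
        (∀ x y : Fin (g + 1) → ZMod 2, ∑ i, S x i * S y i = ∑ i, x i * y i) ∧
        {F : (Fin (g + 1) → ZMod 2) ≃ₗ[ZMod 2] (Fin (g + 1) → ZMod 2) |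
            (∀ x y : Fin (g + 1) → ZMod 2, ∑ i, F x i * F y i = ∑ i, x i * y i) ∧
            ∀ x : Fin (g + 1) → ZMod 2, θ (F x) = θ x} =
          {F | ∃ G : (Fin (g + 1) → ZMod 2) ≃ₗ[ZMod 2] (Fin (g + 1) → ZMod 2),
            ((∀ x y : Fin (g + 1) → ZMod 2, ∑ i, G x i * G y i = ∑ i, x i * y i) ∧
              ∀ x : Fin (g + 1) → ZMod 2, G x 0 + G x 1 = x 0 + x 1) ∧
            ∀ x : Fin (g + 1) → ZMod 2, F x = S (G (S.symm x))}) ∧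
    (∑ i, θ (Pi.single i (1 : ZMod 2)) = 1 →
      ∃ S : (Fin (g + 1) → ZMod 2) ≃ₗ[ZMod 2] (Fin (g + 1) → ZMod 2),
        (∀ x y : Fin (g + 1) → ZMod 2, ∑ i, S x i * S y i = ∑ i, x i * y i) ∧
        {F : (Fin (g + 1) → ZMod 2) ≃ₗ[ZMod 2] (Fin (g + 1) → ZMod 2) |
            (∀ x y : Fin (g + 1) → ZMod 2, ∑ i, F x i * F y i = ∑ i, x i * y i) ∧
            ∀ x : Fin (g + 1) → ZMod 2, θ (F x) = θ x} =
          {F | ∃ G : (Fin (g + 1) → ZMod 2) ≃ₗ[ZMod 2] (Fin (g + 1) → ZMod 2),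
            ((∀ x y : Fin (g + 1) → ZMod 2, ∑ i, G x i * G y i = ∑ i, x i * y i) ∧
              ∀ x : Fin (g + 1) → ZMod 2, G x 0 = x 0) ∧
            ∀ x : Fin (g + 1) → ZMod 2, F x = S (G (S.symm x))}) := by
  set a : Fin (g + 1) → ZMod 2 := fun j => θ (Pi.single j 1) with ha
  have hθx : ∀ x, θ x = ip a x := fun x => theta_eq θ x
  have h1v : (1 : Fin (g + 1)).val = 1 := by
    rw [Fin.val_one']; exact Nat.mod_eq_of_lt (by omega)
  have h01 : (0 : Fin (g + 1)) ≠ 1 := by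
    intro h
    have := congrArg Fin.val h
    rw [h1v] at this
    simp at this
  have haa : ip a a = ∑ j, a j := by
    rw [ip]; exact Finset.sum_congr rfl fun j _ => z2_mul_self (a j)
  have hex1 : ∃ j, a j = 1 := by
    by_contra h
    push_neg at h
    have hz : ∀ j, a j = 0 := fun j => (z2_cases (a j)).resolve_right (h j)
    apply hθ0
    refine LinearMap.ext fun x => ?_
    rw [hθx]
    simp [ip, hz]
  have hex0 : ∃ j, a j = 0 := by
    by_contra h
    push_neg at h
    have ho : ∀ j, a j = 1 := fun j => (z2_cases (a j)).resolve_left (h j)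
    apply hθ1
    funext x
    rw [hθx]
    simp [ip, ho]
  constructor
  · -- case i = 0
    intro hsum
    have hqa : ip a a = 0 := by rw [haa]; exact hsum
    set b : Fin (g + 1) → ZMod 2 := Pi.single 0 1 + Pi.single 1 1 with hb
    have hipb : ∀ x, ip x b = x 0 + x 1 := by
      intro x; rw [hb, ip_add_right, ip_single_right, ip_single_right]
    have hb0 : b 0 = 1 := by
      rw [hb]; simp [Pi.single_eq_of_ne h01]
    have hb1 : b 1 = 1 := by
      rw [hb]; simp [Pi.single_eq_of_ne h01.symm]
    have hbb : ip b b = 0 := by rw [hipb, hb0, hb1]; decide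
    have key : ∃ c, ip a a = ip c c ∧ ip c c = ip b b ∧
        (ip a c = ip a a + 1 ∨ a = c) ∧ (ip c b = ip c c + 1 ∨ c = b) := by
      have main : ∀ j : Fin (g + 1), j ≠ 0 → j ≠ 1 → a 0 + a j = 1 →
          ∃ c, ip a a = ip c c ∧ ip c c = ip b b ∧
          (ip a c = ip a a + 1 ∨ a = c) ∧ (ip c b = ip c c + 1 ∨ c = b) := by
        intro j hj0 hj1 haj
        set c : Fin (g + 1) → ZMod 2 := Pi.single 0 1 + Pi.single j 1 with hc
        have hipc : ∀ x, ip x c = x 0 + x j := by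
          intro x; rw [hc, ip_add_right, ip_single_right, ip_single_right]
        have hc0 : c 0 = 1 := by
          rw [hc]; simp [Pi.single_eq_of_ne (Ne.symm hj0)]
        have hc1 : c 1 = 0 := by
          rw [hc]; simp [Pi.single_eq_of_ne h01.symm, Pi.single_eq_of_ne (Ne.symm hj1)]
        have hcj : c j = 1 := by
          rw [hc]; simp [Pi.single_eq_of_ne hj0]
        have hcc : ip c c = 0 := by rw [hipc, hc0, hcj]; decide
        refine ⟨c, by rw [hqa, hcc], by rw [hcc, hbb], Or.inl ?_, Or.inl ?_⟩
        · rw [hipc a, haj, hqa, zero_add]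
        · rw [hipb c, hc0, hc1, hcc, zero_add, add_zero]
      rcases z2_cases (a 0) with h0 | h0 <;> rcases z2_cases (a 1) with h1 | h1
      · obtain ⟨j, hj⟩ := hex1
        have hj0 : j ≠ 0 := fun h => by rw [h, h0] at hj; exact one_ne_zero hj.symm
        have hj1 : j ≠ 1 := fun h => by rw [h, h1] at hj; exact one_ne_zero hj.symm
        exact main j hj0 hj1 (by rw [h0, hj, zero_add])
      · refine ⟨b, by rw [hqa, hbb], rfl, Or.inl ?_, Or.inr rfl⟩
        rw [hipb a, h0, h1, hqa, zero_add]
      · refine ⟨b, by rw [hqa, hbb], rfl, Or.inl ?_, Or.inr rfl⟩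
        rw [hipb a, h0, h1, hqa, zero_add, add_zero]
      · obtain ⟨j, hj⟩ := hex0
        have hj0 : j ≠ 0 := fun h => by rw [h, h0] at hj; exact one_ne_zero hj
        have hj1 : j ≠ 1 := fun h => by rw [h, h1] at hj; exact one_ne_zero hj
        exact main j hj0 hj1 (by rw [h0, hj, add_zero])
    obtain ⟨c, hqac, hqcb, hone, htwo⟩ := key
    obtain ⟨S, hS, hSb⟩ := exists_S a b c hqac hqcb hone htwo
    refine ⟨S, hS, ?_⟩
    exact conj_stab θ (fun x => x 0 + x 1) S hS
      (fun x => by show θ (S x) = x 0 + x 1; rw [hθx, hSb, ip_comm, hipb])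
  · -- case i = 1
    intro hsum
    have hqa : ip a a = 1 := by rw [haa]; exact hsum
    set b : Fin (g + 1) → ZMod 2 := Pi.single 0 1 with hb
    have hipb : ∀ x, ip x b = x 0 := by
      intro x; rw [hb, ip_single_right]
    have hbb : ip b b = 1 := by rw [hipb, hb]; simp
    have key : ∃ c, ip a a = ip c c ∧ ip c c = ip b b ∧
        (ip a c = ip a a + 1 ∨ a = c) ∧ (ip c b = ip c c + 1 ∨ c = b) := by
      rcases z2_cases (a 0) with h0 | h0
      · refine ⟨b, by rw [hqa, hbb], rfl, Or.inl ?_, Or.inr rfl⟩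
        rw [hipb a, h0, hqa]; decide
      · obtain ⟨j, hj⟩ := hex0
        have hj0 : j ≠ 0 := fun h => by rw [h, h0] at hj; exact one_ne_zero hj
        set c : Fin (g + 1) → ZMod 2 := Pi.single j 1 with hc
        have hipc : ∀ x, ip x c = x j := by
          intro x; rw [hc, ip_single_right]
        have hcj : c j = 1 := by rw [hc]; simp
        have hc0 : c 0 = 0 := by rw [hc]; simp [Pi.single_eq_of_ne (Ne.symm hj0)]
        have hcc : ip c c = 1 := by rw [hipc, hcj]
        refine ⟨c, by rw [hqa, hcc], by rw [hcc, hbb], Or.inl ?_, Or.inl ?_⟩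
        · rw [hipc a, hj, hqa]; decide
        · rw [hipb c, hc0, hcc]; decide
    obtain ⟨c, hqac, hqcb, hone, htwo⟩ := key
    obtain ⟨S, hS, hSb⟩ := exists_S a b c hqac hqcb hone htwo
    refine ⟨S, hS, ?_⟩
    exact conj_stab θ (fun x => x 0) S hS
      (fun x => by show θ (S x) = x 0; rw [hθx, hSb, ip_comm, hipb])
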